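/- In the setting of the twisted super-Laplacian Δ = Δ̄ + Δ̌ and its dual η = η̄ + η̌ (with Δ̄, η̄ as in the twisted bosonic case with parameters n₁ < n₂ ≤ n, and Δ̌ = Σ_{r=1}^m ∂_{θ_r}∂_{ϑ_r}, η̌ = multiplication by Σ_r θ_r ϑ_r), suppose f satisfies Δ(f) = 0, ♭(f) + Σ_r θ_r∂_{θ_r}(f) = ℓ·f and ♭′(f) + Σ_r ϑ_r∂_{ϑ_r}(f) = ℓ'·f. Then for every positive integer ℓ₁, Δ(η^{ℓ₁} f) = ℓ₁(n₂ − n₁ − m + ℓ + ℓ' + ℓ₁ − 1)·η^{ℓ₁−1} f. -/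

import Mathlib

open TensorProduct MvPolynomial

noncomputable section

variable (n m : ℕ)

/-- bosonic polynomial part -/
abbrev PolyA (n : ℕ) := MvPolynomial (Fin n ⊕ Fin n) ℂ
/-- fermionic exterior part -/
abbrev ExtA (m : ℕ) := ExteriorAlgebra ℂ ((Fin m ⊕ Fin m) → ℂ)
/-- full supersymmetric algebra -/
abbrev SAlg (n m : ℕ) := PolyA n ⊗[ℂ] ExtA m

-- generators
def xv (i : Fin n) : PolyA n := X (Sum.inl i)
def yv (i : Fin n) : PolyA n := X (Sum.inr i)
def θv (r : Fin m) : ExtA m := ExteriorAlgebra.ι ℂ (Pi.single (Sum.inl r) 1)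
def ϑv (r : Fin m) : ExtA m := ExteriorAlgebra.ι ℂ (Pi.single (Sum.inr r) 1)

-- odd superderivations on the exterior part
def dθ (r : Fin m) : Module.End ℂ (ExtA m) :=
  CliffordAlgebra.contractLeft (Q := (0 : QuadraticForm ℂ ((Fin m ⊕ Fin m) → ℂ)))
    (LinearMap.proj (Sum.inl r))
def dϑ (r : Fin m) : Module.End ℂ (ExtA m) :=
  CliffordAlgebra.contractLeft (Q := (0 : QuadraticForm ℂ ((Fin m ⊕ Fin m) → ℂ)))
    (LinearMap.proj (Sum.inr r))

-- operators on the full algebra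
def pdx (i : Fin n) : Module.End ℂ (SAlg n m) :=
  TensorProduct.map ((pderiv (Sum.inl i) : Derivation ℂ (PolyA n) (PolyA n)) : PolyA n →ₗ[ℂ] PolyA n) LinearMap.id
def pdy (i : Fin n) : Module.End ℂ (SAlg n m) :=
  TensorProduct.map ((pderiv (Sum.inr i) : Derivation ℂ (PolyA n) (PolyA n)) : PolyA n →ₗ[ℂ] PolyA n) LinearMap.id
def pdθ (r : Fin m) : Module.End ℂ (SAlg n m) :=
  TensorProduct.map LinearMap.id (dθ m r)
def pdϑ (r : Fin m) : Module.End ℂ (SAlg n m) :=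
  TensorProduct.map LinearMap.id (dϑ m r)

-- multiplication operators
def mx (i : Fin n) : Module.End ℂ (SAlg n m) := LinearMap.mulLeft ℂ (xv n i ⊗ₜ[ℂ] 1)
def mθ (r : Fin m) : Module.End ℂ (SAlg n m) := LinearMap.mulLeft ℂ ((1 : PolyA n) ⊗ₜ[ℂ] θv m r)

def my (i : Fin n) : Module.End ℂ (SAlg n m) := LinearMap.mulLeft ℂ (yv n i ⊗ₜ[ℂ] 1)
def mϑ (r : Fin m) : Module.End ℂ (SAlg n m) := LinearMap.mulLeft ℂ ((1 : PolyA n) ⊗ₜ[ℂ] ϑv m r)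

/-- the element η = Σ_i x_i y_i + Σ_r θ_r ϑ_r of the superalgebra -/
def ηelt : SAlg n m :=
  (∑ i : Fin n, (xv n i * yv n i) ⊗ₜ[ℂ] (1 : ExtA m))
    + ∑ r : Fin m, (1 : PolyA n) ⊗ₜ[ℂ] (θv m r * ϑv m r)

/-- the super-Laplacian Δ = Σ_i ∂_{x_i}∂_{y_i} + Σ_r ∂_{θ_r}∂_{ϑ_r} -/
def ΔS : Module.End ℂ (SAlg n m) :=
  (∑ i : Fin n, pdx n m i ∘ₗ pdy n m i) + ∑ r : Fin m, pdθ n m r ∘ₗ pdϑ n m r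
/-- multiplication by η -/
def ηop : Module.End ℂ (SAlg n m) := LinearMap.mulLeft ℂ (ηelt n m)

variable (n₁ n₂ : ℕ)

/-- the twisted super-Laplacian Δ = Δ̄ + Δ̌ -/
def Δtw : Module.End ℂ (SAlg n m) :=
  (∑ i : Fin n,
    if i.val < n₁ then -(mx n m i ∘ₗ pdy n m i)
    else if i.val < n₂ then pdx n m i ∘ₗ pdy n m i
    else -(my n m i ∘ₗ pdx n m i))
  + ∑ r : Fin m, pdθ n m r ∘ₗ pdϑ n m r

/-- the dual operator η = η̄ + η̌ -/
def ηtw : Module.End ℂ (SAlg n m) :=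
  (∑ i : Fin n,
    if i.val < n₁ then my n m i ∘ₗ pdx n m i
    else if i.val < n₂ then mx n m i ∘ₗ my n m i
    else mx n m i ∘ₗ pdy n m i)
  + ∑ r : Fin m, mθ n m r ∘ₗ mϑ n m r

/-- ♭ + Σ_r θ_r∂_{θ_r} -/
def degtwX : Module.End ℂ (SAlg n m) :=
  (∑ i : Fin n, if i.val < n₁ then -(mx n m i ∘ₗ pdx n m i) else mx n m i ∘ₗ pdx n m i)
  + ∑ r : Fin m, mθ n m r ∘ₗ pdθ n m r

/-- ♭′ + Σ_r ϑ_r∂_{ϑ_r} -/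
def degtwY : Module.End ℂ (SAlg n m) :=
  (∑ i : Fin n, if i.val < n₂ then my n m i ∘ₗ pdy n m i else -(my n m i ∘ₗ pdy n m i))
  + ∑ r : Fin m, mϑ n m r ∘ₗ pdϑ n m r




section RingAux
variable {R : Type*} [Ring R] {p q a b t s c d : R}

lemma comm_block {a b c d : R} (h1 : Commute a c) (h2 : Commute a d) (h3 : Commute b c)
    (h4 : Commute b d) : Commute (a * b) (c * d) :=
  (h1.mul_right h2).mul_left (h3.mul_right h4)

/-- case i < n₁ for [D,E] -/
lemma diag1 (hpa : p * a = a * p + 1) (hqb : q * b = b * q + 1)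
    (hpb : p * b = b * p) (hpq : p * q = q * p) (hab : a * b = b * a) :
    (-(a * q)) * (b * p) = (b * p) * (-(a * q)) + (-(a * p)) + b * q := by
  have l1 : (-(a * q)) * (b * p) = -(a * (q * b) * p) := by noncomm_ring
  have l2 : (b * p) * (-(a * q)) = -(b * (p * a) * q) := by noncomm_ring
  rw [l1, l2, hqb, hpa]
  have l3 : -(a * (b * q + 1) * p) = -(a * b * (q * p)) - a * p := by noncomm_ring
  rw [l3, ← hpq, hab]
  noncomm_ring

/-- case n₁ ≤ i < n₂ for [D,E] -/
lemma diag2 (hpa : p * a = a * p + 1) (hqb : q * b = b * q + 1)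
    (hpb : p * b = b * p) (hqa : q * a = a * q) (hab : a * b = b * a) :
    (p * q) * (a * b) = (a * b) * (p * q) + a * p + b * q + 1 := by
  have l1 : (p * q) * (a * b) = p * (q * a) * b := by noncomm_ring
  rw [l1, hqa]
  have l2 : p * (a * q) * b = (p * a) * (q * b) := by noncomm_ring
  rw [l2, hpa, hqb]
  have l3 : (a * p + 1) * (b * q + 1) = a * (p * b) * q + a * p + b * q + 1 := by noncomm_ring
  rw [l3, hpb]
  noncomm_ring

/-- case i ≥ n₂ for [D,E] -/
lemma diag3 (hpa : p * a = a * p + 1) (hqb : q * b = b * q + 1)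
    (hqa : q * a = a * q) (hpq : p * q = q * p) (hab : a * b = b * a) :
    (-(b * p)) * (a * q) = (a * q) * (-(b * p)) + a * p + (-(b * q)) := by
  have l1 : (-(b * p)) * (a * q) = -(b * (p * a) * q) := by noncomm_ring
  rw [l1, hpa]
  have l2 : (a * q) * (-(b * p)) = -(a * (q * b) * p) := by noncomm_ring
  rw [l2, hqb]
  have l3 : -(b * (a * p + 1) * q) = -((b * a) * (p * q)) - b * q := by noncomm_ring
  rw [l3, ← hab, hpq]
  have l4 : -(a * (b * q + 1) * p) = -((a * b) * (q * p)) - a * p := by noncomm_ring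
  rw [l4, ← hpq, hpq]
  noncomm_ring

/-- fermionic diagonal for [F,G] -/
lemma fdiag1 (htc : t * c = 1 - c * t) (hsd : s * d = 1 - d * s)
    (htd : t * d = -(d * t)) (hsc : s * c = -(c * s)) :
    (t * s) * (c * d) = (c * d) * (t * s) + c * t + d * s + (-1) := by
  have l1 : (t * s) * (c * d) = t * (s * c) * d := by noncomm_ring
  rw [l1, hsc]
  have l2 : t * -(c * s) * d = -((t * c) * (s * d)) := by noncomm_ring
  rw [l2, htc, hsd]
  have l3 : -((1 - c * t) * (1 - d * s)) = -1 + d * s + c * t - c * (t * d) * s := by noncomm_ring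
  rw [l3, htd]
  noncomm_ring

/-- anticommuting pairs give commuting products -/
lemma anti4 (h1 : a * c = -(c * a)) (h2 : a * d = -(d * a)) (h3 : b * c = -(c * b))
    (h4 : b * d = -(d * b)) : (a * b) * (c * d) = (c * d) * (a * b) := by
  have l1 : (a * b) * (c * d) = a * (b * c) * d := by noncomm_ring
  rw [l1, h3]
  have l2 : a * -(c * b) * d = -((a * c) * (b * d)) := by noncomm_ring
  rw [l2, h1, h4]
  have l3 : -(-(c * a) * -(d * b)) = -(c * (a * d) * b) := by noncomm_ring
  rw [l3, h2]
  noncomm_ring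

/-- [HX, E] diagonal, case i < n₁ -/
lemma xdiag1 (hpa : p * a = a * p + 1) (hpb : p * b = b * p) (hab : a * b = b * a) :
    (-(a * p)) * (b * p) = (b * p) * (-(a * p)) + b * p := by
  have l1 : (-(a * p)) * (b * p) = -(a * (p * b) * p) := by noncomm_ring
  rw [l1, hpb]
  have l2 : (b * p) * (-(a * p)) = -(b * (p * a) * p) := by noncomm_ring
  rw [l2, hpa]
  have l3 : -(b * (a * p + 1) * p) = -((b * a) * (p * p)) - b * p := by noncomm_ring
  rw [l3, ← hab]
  have l4 : -(a * (b * p) * p) = -((a * b) * (p * p)) := by noncomm_ring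
  rw [l4]
  noncomm_ring

/-- [HX, E] diagonal, case n₁ ≤ i < n₂ -/
lemma xdiag2 (hpa : p * a = a * p + 1) (hpb : p * b = b * p) (hab : a * b = b * a) :
    (a * p) * (a * b) = (a * b) * (a * p) + a * b := by
  have l1 : (a * p) * (a * b) = a * (p * a) * b := by noncomm_ring
  rw [l1, hpa]
  have l2 : a * (a * p + 1) * b = a * a * (p * b) + a * b := by noncomm_ring
  rw [l2, hpb]
  have l3 : (a * b) * (a * p) = a * (b * a) * p := by noncomm_ring
  rw [l3, ← hab]
  noncomm_ring

/-- [HX, E] diagonal, case i ≥ n₂ -/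
lemma xdiag3 (hpa : p * a = a * p + 1) (hqa : q * a = a * q) (hpq : p * q = q * p) :
    (a * p) * (a * q) = (a * q) * (a * p) + a * q := by
  have l1 : (a * p) * (a * q) = a * (p * a) * q := by noncomm_ring
  rw [l1, hpa]
  have l2 : (a * q) * (a * p) = a * (q * a) * p := by noncomm_ring
  rw [l2, hqa]
  have l3 : a * (a * q) * p = a * a * (q * p) := by noncomm_ring
  rw [l3, ← hpq]
  noncomm_ring

/-- [KX, G] diagonal -/
lemma xfdiag (htc : t * c = 1 - c * t) (htd : t * d = -(d * t)) (hcd : c * d = -(d * c))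
    (hcc : c * c = 0) :
    (c * t) * (c * d) = (c * d) * (c * t) + c * d := by
  have hdc : d * c = -(c * d) := by rw [hcd, neg_neg]
  have l1 : (c * t) * (c * d) = c * (t * c) * d := by noncomm_ring
  rw [l1, htc]
  have l2 : c * (1 - c * t) * d = c * d - (c * c) * (t * d) := by noncomm_ring
  rw [l2, hcc]
  have l3 : (c * d) * (c * t) = c * (d * c) * t := by noncomm_ring
  rw [l3, hdc, hcd]
  have l4 : c * -(-(d * c)) * t = (c * d) * (c * t) := by noncomm_ring
  rw [l4]
  have l5 : (c * d) * (c * t) = c * (d * c) * t := by noncomm_ring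
  rw [l5, hdc]
  have l6 : c * -(c * d) * t = -((c * c) * (d * t)) := by noncomm_ring
  rw [l6, hcc]
  noncomm_ring

/-- [HY, E] diagonal, case i < n₁ -/
lemma ydiag1 (hqb : q * b = b * q + 1) (hpb : p * b = b * p) (hpq : p * q = q * p) :
    (b * q) * (b * p) = (b * p) * (b * q) + b * p := by
  have l1 : (b * q) * (b * p) = b * (q * b) * p := by noncomm_ring
  rw [l1, hqb]
  have l2 : (b * p) * (b * q) = b * (p * b) * q := by noncomm_ring
  rw [l2, hpb]
  have l3 : b * (b * p) * q = b * b * (p * q) := by noncomm_ring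
  rw [l3, hpq]
  noncomm_ring

/-- [HY, E] diagonal, case n₁ ≤ i < n₂ -/
lemma ydiag2 (hqb : q * b = b * q + 1) (hqa : q * a = a * q) (hab : a * b = b * a) :
    (b * q) * (a * b) = (a * b) * (b * q) + a * b := by
  have l1 : (b * q) * (a * b) = b * (q * a) * b := by noncomm_ring
  rw [l1, hqa]
  have l2 : b * (a * q) * b = (b * a) * (q * b) := by noncomm_ring
  rw [l2, hqb, ← hab]
  noncomm_ring

/-- [HY, E] diagonal, case i ≥ n₂ -/
lemma ydiag3 (hqb : q * b = b * q + 1) (hqa : q * a = a * q) (hab : a * b = b * a) :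
    (-(b * q)) * (a * q) = (a * q) * (-(b * q)) + a * q := by
  have l1 : (-(b * q)) * (a * q) = -(b * (q * a) * q) := by noncomm_ring
  rw [l1, hqa]
  have l2 : (a * q) * (-(b * q)) = -(a * (q * b) * q) := by noncomm_ring
  rw [l2, hqb]
  have l3 : -(a * (b * q + 1) * q) = -((a * b) * (q * q)) - a * q := by noncomm_ring
  rw [l3, hab]
  have l4 : -(b * (a * q) * q) = -((b * a) * (q * q)) := by noncomm_ring
  rw [l4]
  noncomm_ring

/-- [KY, G] diagonal -/
lemma yfdiag (hsd : s * d = 1 - d * s) (hsc : s * c = -(c * s)) (hcd : c * d = -(d * c))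
    (hdd : d * d = 0) :
    (d * s) * (c * d) = (c * d) * (d * s) + c * d := by
  have l1 : (d * s) * (c * d) = d * (s * c) * d := by noncomm_ring
  rw [l1, hsc]
  have l2 : d * -(c * s) * d = -((d * c) * (s * d)) := by noncomm_ring
  have hdc : d * c = -(c * d) := by rw [hcd, neg_neg]
  rw [l2, hdc, hsd]
  have l3 : -(-(c * d) * (1 - d * s)) = c * d - c * (d * d) * s := by noncomm_ring
  rw [l3, hdd]
  have l4 : (c * d) * (d * s) = c * (d * d) * s := by noncomm_ring
  rw [l4, hdd]
  noncomm_ring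

end RingAux

section SumAux
variable {R : Type*} [Ring R] {ι κ : Type*} [Fintype ι] [Fintype κ] [DecidableEq ι]

lemma sum_mul_sum_comm (A B C : ι → R)
    (h : ∀ i j, A i * B j = B j * A i + if i = j then C i else 0) :
    (∑ i, A i) * (∑ j, B j) = (∑ j, B j) * (∑ i, A i) + ∑ i, C i := by
  rw [Finset.sum_mul_sum, Finset.sum_mul_sum]
  simp_rw [h, Finset.sum_add_distrib, Finset.sum_ite_eq, Finset.mem_univ, if_pos]
  rw [Finset.sum_comm]

lemma sum_mul_sum_commute (A : ι → R) (B : κ → R) (h : ∀ i j, Commute (A i) (B j)) :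
    (∑ i, A i) * (∑ j, B j) = (∑ j, B j) * (∑ i, A i) := by
  have : Commute (∑ i, A i) (∑ j, B j) :=
    Commute.sum_left _ _ _ fun i _ => Commute.sum_right _ _ _ fun j _ => h i j
  exact this.eq

end SumAux

namespace SAux

variable (n m : ℕ)

/-- unified bosonic partial derivative -/
def pdS (u : Fin n ⊕ Fin n) : Module.End ℂ (SAlg n m) :=
  TensorProduct.map ((pderiv u : Derivation ℂ (PolyA n) (PolyA n)) : PolyA n →ₗ[ℂ] PolyA n)
    LinearMap.id

/-- unified bosonic multiplication -/
def mlS (u : Fin n ⊕ Fin n) : Module.End ℂ (SAlg n m) :=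
  LinearMap.mulLeft ℂ ((X u : PolyA n) ⊗ₜ[ℂ] (1 : ExtA m))

/-- unified fermionic contraction -/
def cS (w : Fin m ⊕ Fin m) : Module.End ℂ (SAlg n m) :=
  TensorProduct.map LinearMap.id
    (CliffordAlgebra.contractLeft (Q := (0 : QuadraticForm ℂ ((Fin m ⊕ Fin m) → ℂ)))
      (LinearMap.proj w))

/-- unified fermionic multiplication -/
def mfS (w : Fin m ⊕ Fin m) : Module.End ℂ (SAlg n m) :=
  LinearMap.mulLeft ℂ ((1 : PolyA n) ⊗ₜ[ℂ] ExteriorAlgebra.ι ℂ (Pi.single w 1))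

lemma pdx_eq (i : Fin n) : pdx n m i = pdS n m (Sum.inl i) := rfl
lemma pdy_eq (i : Fin n) : pdy n m i = pdS n m (Sum.inr i) := rfl
lemma mx_eq (i : Fin n) : mx n m i = mlS n m (Sum.inl i) := rfl
lemma my_eq (i : Fin n) : my n m i = mlS n m (Sum.inr i) := rfl
lemma pdθ_eq (r : Fin m) : pdθ n m r = cS n m (Sum.inl r) := rfl
lemma pdϑ_eq (r : Fin m) : pdϑ n m r = cS n m (Sum.inr r) := rfl
lemma mθ_eq (r : Fin m) : mθ n m r = mfS n m (Sum.inl r) := rfl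
lemma mϑ_eq (r : Fin m) : mϑ n m r = mfS n m (Sum.inr r) := rfl

lemma rel_pd_ml (u v : Fin n ⊕ Fin n) :
    pdS n m u * mlS n m v = mlS n m v * pdS n m u + if u = v then 1 else 0 := by
  apply TensorProduct.ext'
  intro a b
  simp only [pdS, mlS, Module.End.mul_apply, LinearMap.mulLeft_apply, LinearMap.add_apply,
    TensorProduct.map_tmul, LinearMap.id_coe, id_eq, Algebra.TensorProduct.tmul_mul_tmul,
    one_mul, Derivation.coeFn_coe]
  rw [pderiv_mul, pderiv_X, Pi.single_apply]
  by_cases h : u = v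
  · subst h
    simp only [if_true, eq_self_iff_true, one_mul, TensorProduct.add_tmul,
      Module.End.one_eq_id, LinearMap.id_coe, id_eq]
    abel
  · simp [h, Ne.symm h, TensorProduct.add_tmul]

lemma rel_pd_pd (u v : Fin n ⊕ Fin n) :
    pdS n m u * pdS n m v = pdS n m v * pdS n m u := by
  apply TensorProduct.ext'
  intro a b
  simp only [pdS, Module.End.mul_apply, TensorProduct.map_tmul, LinearMap.id_coe, id_eq,
    Derivation.coeFn_coe]
  refine congrArg (fun z => z ⊗ₜ[ℂ] b) ?_
  have key : ∀ (u v k : Fin n ⊕ Fin n),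
      (pderiv u) (Pi.single (M := fun _ => PolyA n) v 1 k) = 0 := by
    intro u v k
    rcases eq_or_ne k v with rfl | h
    · simp
    · simp [Pi.single_eq_of_ne h]
  induction a using MvPolynomial.induction_on with
  | C q => simp
  | add p q hp hq => simp [hp, hq]
  | mul_X p k hp =>
      simp only [pderiv_mul, map_add, pderiv_X, hp, key, mul_zero, add_zero]
      ring

lemma rel_ml_ml (u v : Fin n ⊕ Fin n) :
    mlS n m u * mlS n m v = mlS n m v * mlS n m u := by
  apply TensorProduct.ext'
  intro a b
  simp only [mlS, Module.End.mul_apply, LinearMap.mulLeft_apply,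
    Algebra.TensorProduct.tmul_mul_tmul, one_mul]
  rw [← mul_assoc, ← mul_assoc, mul_comm (X v) (X u)]

lemma rel_c_mf (w w' : Fin m ⊕ Fin m) :
    cS n m w * mfS n m w' = (if w = w' then 1 else 0) - mfS n m w' * cS n m w := by
  apply TensorProduct.ext'
  intro a b
  simp only [cS, mfS, Module.End.mul_apply, LinearMap.mulLeft_apply, LinearMap.sub_apply,
    TensorProduct.map_tmul, LinearMap.id_coe, id_eq, Algebra.TensorProduct.tmul_mul_tmul,
    one_mul]
  rw [CliffordAlgebra.contractLeft_ι_mul]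
  simp only [LinearMap.proj_apply, Pi.single_apply, TensorProduct.tmul_sub,
    TensorProduct.tmul_smul]
  by_cases h : w = w'
  · subst h
    simp [Module.End.one_apply]
  · simp [h, Ne.symm h]

lemma rel_c_c (w w' : Fin m ⊕ Fin m) :
    cS n m w * cS n m w' = -(cS n m w' * cS n m w) := by
  apply TensorProduct.ext'
  intro a b
  simp only [cS, Module.End.mul_apply, LinearMap.neg_apply, TensorProduct.map_tmul,
    LinearMap.id_coe, id_eq]
  rw [CliffordAlgebra.contractLeft_comm]
  simp [TensorProduct.tmul_neg]

lemma ι_swap (w w' : Fin m ⊕ Fin m) :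
    (ExteriorAlgebra.ι ℂ (Pi.single w 1) : ExtA m) * ExteriorAlgebra.ι ℂ (Pi.single w' 1)
      = -(ExteriorAlgebra.ι ℂ (Pi.single w' 1) * ExteriorAlgebra.ι ℂ (Pi.single w 1)) := by
  rw [eq_neg_iff_add_eq_zero]
  exact ExteriorAlgebra.ι_add_mul_swap _ _

lemma rel_mf_mf (w w' : Fin m ⊕ Fin m) :
    mfS n m w * mfS n m w' = -(mfS n m w' * mfS n m w) := by
  apply TensorProduct.ext'
  intro a b
  simp only [mfS, Module.End.mul_apply, LinearMap.mulLeft_apply, LinearMap.neg_apply,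
    Algebra.TensorProduct.tmul_mul_tmul, one_mul]
  rw [← mul_assoc, ← mul_assoc, ι_swap]
  simp [TensorProduct.tmul_neg]

lemma rel_mf_sq (w : Fin m ⊕ Fin m) : mfS n m w * mfS n m w = 0 := by
  apply TensorProduct.ext'
  intro a b
  simp only [mfS, Module.End.mul_apply, LinearMap.mulLeft_apply,
    Algebra.TensorProduct.tmul_mul_tmul, one_mul, LinearMap.zero_apply]
  rw [← mul_assoc, ExteriorAlgebra.ι_sq_zero]
  simp

lemma rel_pd_c (u : Fin n ⊕ Fin n) (w : Fin m ⊕ Fin m) :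
    Commute (pdS n m u) (cS n m w) := by
  apply TensorProduct.ext'
  intro a b
  simp [pdS, cS, Module.End.mul_apply, TensorProduct.map_tmul]

lemma rel_pd_mf (u : Fin n ⊕ Fin n) (w : Fin m ⊕ Fin m) :
    Commute (pdS n m u) (mfS n m w) := by
  apply TensorProduct.ext'
  intro a b
  simp [pdS, mfS, Module.End.mul_apply, TensorProduct.map_tmul,
    Algebra.TensorProduct.tmul_mul_tmul]

lemma rel_ml_c (u : Fin n ⊕ Fin n) (w : Fin m ⊕ Fin m) :
    Commute (mlS n m u) (cS n m w) := by
  apply TensorProduct.ext'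
  intro a b
  simp [mlS, cS, Module.End.mul_apply, TensorProduct.map_tmul,
    Algebra.TensorProduct.tmul_mul_tmul]

lemma rel_ml_mf (u : Fin n ⊕ Fin n) (w : Fin m ⊕ Fin m) :
    Commute (mlS n m u) (mfS n m w) := by
  apply TensorProduct.ext'
  intro a b
  simp [mlS, mfS, Module.End.mul_apply, Algebra.TensorProduct.tmul_mul_tmul]


variable (n₁ n₂ : ℕ)

def Dop (i : Fin n) : Module.End ℂ (SAlg n m) :=
  if i.val < n₁ then -(mx n m i ∘ₗ pdy n m i)
  else if i.val < n₂ then pdx n m i ∘ₗ pdy n m i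
  else -(my n m i ∘ₗ pdx n m i)

def Eop (i : Fin n) : Module.End ℂ (SAlg n m) :=
  if i.val < n₁ then my n m i ∘ₗ pdx n m i
  else if i.val < n₂ then mx n m i ∘ₗ my n m i
  else mx n m i ∘ₗ pdy n m i

def Fop (r : Fin m) : Module.End ℂ (SAlg n m) := pdθ n m r ∘ₗ pdϑ n m r
def Gop (r : Fin m) : Module.End ℂ (SAlg n m) := mθ n m r ∘ₗ mϑ n m r

def HXop (i : Fin n) : Module.End ℂ (SAlg n m) :=
  if i.val < n₁ then -(mx n m i ∘ₗ pdx n m i) else mx n m i ∘ₗ pdx n m i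

def HYop (i : Fin n) : Module.End ℂ (SAlg n m) :=
  if i.val < n₂ then my n m i ∘ₗ pdy n m i else -(my n m i ∘ₗ pdy n m i)

def KXop (r : Fin m) : Module.End ℂ (SAlg n m) := mθ n m r ∘ₗ pdθ n m r
def KYop (r : Fin m) : Module.End ℂ (SAlg n m) := mϑ n m r ∘ₗ pdϑ n m r

lemma Δtw_eq : Δtw n m n₁ n₂ = (∑ i, Dop n m n₁ n₂ i) + ∑ r, Fop n m r := rfl
lemma ηtw_eq : ηtw n m n₁ n₂ = (∑ i, Eop n m n₁ n₂ i) + ∑ r, Gop n m r := rfl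
lemma degtwX_eq : degtwX n m n₁ = (∑ i, HXop n m n₁ i) + ∑ r, KXop n m r := rfl
lemma degtwY_eq : degtwY n m n₂ = (∑ i, HYop n m n₂ i) + ∑ r, KYop n m r := rfl

-- basic commutation across distinct bosonic indices
lemma bos_commute {i j : Fin n} (hij : i ≠ j) (x y : Module.End ℂ (SAlg n m))
    (hx : x = pdS n m (Sum.inl i) ∨ x = pdS n m (Sum.inr i) ∨ x = mlS n m (Sum.inl i) ∨
      x = mlS n m (Sum.inr i))
    (hy : y = pdS n m (Sum.inl j) ∨ y = pdS n m (Sum.inr j) ∨ y = mlS n m (Sum.inl j) ∨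
      y = mlS n m (Sum.inr j)) : Commute x y := by
  have h1 : (Sum.inl i : Fin n ⊕ Fin n) ≠ Sum.inl j := fun h => hij (Sum.inl_injective h)
  have h2 : (Sum.inl i : Fin n ⊕ Fin n) ≠ Sum.inr j := Sum.inl_ne_inr
  have h3 : (Sum.inr i : Fin n ⊕ Fin n) ≠ Sum.inl j := Sum.inr_ne_inl
  have h4 : (Sum.inr i : Fin n ⊕ Fin n) ≠ Sum.inr j := fun h => hij (Sum.inr_injective h)
  have pm : ∀ u v : Fin n ⊕ Fin n, u ≠ v → Commute (pdS n m u) (mlS n m v) := by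
    intro u v huv
    have := rel_pd_ml n m u v
    rw [if_neg huv, add_zero] at this
    exact this
  rcases hx with rfl | rfl | rfl | rfl <;> rcases hy with rfl | rfl | rfl | rfl
  · exact rel_pd_pd n m _ _
  · exact rel_pd_pd n m _ _
  · exact pm _ _ h1
  · exact pm _ _ h2
  · exact rel_pd_pd n m _ _
  · exact rel_pd_pd n m _ _
  · exact pm _ _ h3
  · exact pm _ _ h4
  · exact (pm _ _ (Ne.symm h1)).symm
  · exact (pm _ _ (Ne.symm h2)).symm
  · exact rel_ml_ml n m _ _
  · exact rel_ml_ml n m _ _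
  · exact (pm _ _ (Ne.symm h3)).symm
  · exact (pm _ _ (Ne.symm h4)).symm
  · exact rel_ml_ml n m _ _
  · exact rel_ml_ml n m _ _


-- specialized relation forms
lemma hpa' (i : Fin n) :
    pdS n m (Sum.inl i) * mlS n m (Sum.inl i) = mlS n m (Sum.inl i) * pdS n m (Sum.inl i) + 1 := by
  simpa using rel_pd_ml n m (Sum.inl i) (Sum.inl i)

lemma hqb' (i : Fin n) :
    pdS n m (Sum.inr i) * mlS n m (Sum.inr i) = mlS n m (Sum.inr i) * pdS n m (Sum.inr i) + 1 := by
  simpa using rel_pd_ml n m (Sum.inr i) (Sum.inr i)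

lemma hpb' (i : Fin n) :
    pdS n m (Sum.inl i) * mlS n m (Sum.inr i) = mlS n m (Sum.inr i) * pdS n m (Sum.inl i) := by
  simpa using rel_pd_ml n m (Sum.inl i) (Sum.inr i)

lemma hqa' (i : Fin n) :
    pdS n m (Sum.inr i) * mlS n m (Sum.inl i) = mlS n m (Sum.inl i) * pdS n m (Sum.inr i) := by
  simpa using rel_pd_ml n m (Sum.inr i) (Sum.inl i)

lemma htc' (r : Fin m) :
    cS n m (Sum.inl r) * mfS n m (Sum.inl r) = 1 - mfS n m (Sum.inl r) * cS n m (Sum.inl r) := by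
  simpa using rel_c_mf n m (Sum.inl r) (Sum.inl r)

lemma hsd' (r : Fin m) :
    cS n m (Sum.inr r) * mfS n m (Sum.inr r) = 1 - mfS n m (Sum.inr r) * cS n m (Sum.inr r) := by
  simpa using rel_c_mf n m (Sum.inr r) (Sum.inr r)

lemma hc_mf_ne {w w' : Fin m ⊕ Fin m} (h : w ≠ w') :
    cS n m w * mfS n m w' = -(mfS n m w' * cS n m w) := by
  have h1 := rel_c_mf n m w w'
  rw [if_neg h] at h1
  have h2 : (0 : Module.End ℂ (SAlg n m)) - mfS n m w' * cS n m w
      = -(mfS n m w' * cS n m w) := by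
    ext z
    simp
  exact h1.trans h2

lemma hmf_c_ne {w w' : Fin m ⊕ Fin m} (h : w' ≠ w) :
    mfS n m w * cS n m w' = -(cS n m w' * mfS n m w) := by
  apply TensorProduct.ext'
  intro a b
  simp only [cS, mfS, Module.End.mul_apply, LinearMap.mulLeft_apply, LinearMap.neg_apply,
    TensorProduct.map_tmul, LinearMap.id_coe, id_eq, Algebra.TensorProduct.tmul_mul_tmul,
    one_mul]
  rw [CliffordAlgebra.contractLeft_ι_mul]
  simp [LinearMap.proj_apply, Pi.single_apply, if_neg h, TensorProduct.tmul_sub,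
    TensorProduct.tmul_smul, TensorProduct.tmul_neg, TensorProduct.neg_tmul, neg_neg]

lemma pd_ml_comm {u v : Fin n ⊕ Fin n} (h : u ≠ v) : Commute (pdS n m u) (mlS n m v) := by
  have h1 := rel_pd_ml n m u v
  rw [if_neg h, add_zero] at h1
  exact h1

lemma ml_pd_comm {u v : Fin n ⊕ Fin n} (h : u ≠ v) : Commute (mlS n m u) (pdS n m v) :=
  (pd_ml_comm n m (Ne.symm h)).symm

lemma ml_ml_comm (u v : Fin n ⊕ Fin n) : Commute (mlS n m u) (mlS n m v) :=
  rel_ml_ml n m u v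

lemma pd_pd_comm (u v : Fin n ⊕ Fin n) : Commute (pdS n m u) (pdS n m v) :=
  rel_pd_pd n m u v

lemma negmulE (f g : Module.End ℂ (SAlg n m)) : (-f) * g = -(f * g) := by
  ext z; simp

lemma mulnegE (f g : Module.End ℂ (SAlg n m)) : f * (-g) = -(f * g) := by
  ext z; simp

lemma neginjE {f g : Module.End ℂ (SAlg n m)} (h : f = g) : -f = -g := by rw [h]

lemma Dop_mul_Eop (h12 : n₁ < n₂) (i j : Fin n) :
    Dop n m n₁ n₂ i * Eop n m n₁ n₂ j = Eop n m n₁ n₂ j * Dop n m n₁ n₂ i +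
      if i = j then (HXop n m n₁ i + HYop n m n₂ i +
        (if n₁ ≤ i.val ∧ i.val < n₂ then (1:ℂ) else 0) • 1) else 0 := by
  have smul0 : ((0:ℂ) • (1 : Module.End ℂ (SAlg n m))) = 0 := by ext z; simp
  have smul1 : ((1:ℂ) • (1 : Module.End ℂ (SAlg n m))) = 1 := by ext z; simp
  by_cases hij : i = j
  · subst hij
    rw [if_pos rfl]
    simp only [Dop, Eop, HXop, HYop, ← Module.End.mul_eq_comp, pdx_eq, pdy_eq, mx_eq, my_eq]
    rcases lt_or_ge i.val n₁ with h1 | h1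
    · have h2 : i.val < n₂ := h1.trans h12
      simp only [if_pos h1, if_pos h2, if_neg (show ¬(n₁ ≤ i.val ∧ i.val < n₂) by omega),
        smul0, add_zero]
      rw [diag1 (R := Module.End ℂ (SAlg n m)) (hpa' n m i) (hqb' n m i) (hpb' n m i) (rel_pd_pd n m _ _) (rel_ml_ml n m _ _)]
      abel
    · rcases lt_or_ge i.val n₂ with h2 | h2
      · simp only [if_neg (not_lt.2 h1), if_pos h2,
          if_pos (show n₁ ≤ i.val ∧ i.val < n₂ from ⟨h1, h2⟩), smul1]
        rw [diag2 (R := Module.End ℂ (SAlg n m)) (hpa' n m i) (hqb' n m i) (hpb' n m i) (hqa' n m i) (rel_ml_ml n m _ _)]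
        abel
      · simp only [if_neg (not_lt.2 h1), if_neg (not_lt.2 h2),
          if_neg (show ¬(n₁ ≤ i.val ∧ i.val < n₂) by omega), smul0, add_zero]
        rw [diag3 (R := Module.End ℂ (SAlg n m)) (hpa' n m i) (hqb' n m i) (hqa' n m i) (rel_pd_pd n m _ _) (rel_ml_ml n m _ _)]
        abel
  · rw [if_neg hij, add_zero]
    simp only [Dop, Eop, ← Module.End.mul_eq_comp, pdx_eq, pdy_eq, mx_eq, my_eq]
    have e1 : (Sum.inl i : Fin n ⊕ Fin n) ≠ Sum.inl j := fun h => hij (Sum.inl_injective h)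
    have e2 : (Sum.inl i : Fin n ⊕ Fin n) ≠ Sum.inr j := Sum.inl_ne_inr
    have e3 : (Sum.inr i : Fin n ⊕ Fin n) ≠ Sum.inl j := Sum.inr_ne_inl
    have e4 : (Sum.inr i : Fin n ⊕ Fin n) ≠ Sum.inr j := fun h => hij (Sum.inr_injective h)
    rcases lt_or_ge i.val n₁ with hi1 | hi1
    · simp only [if_pos hi1]
      rcases lt_or_ge j.val n₁ with hj1 | hj1
      · simp only [if_pos hj1]
        rw [negmulE, mulnegE]
        exact neginjE n m (comm_block (R := Module.End ℂ (SAlg n m))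
          (ml_ml_comm n m _ _) (ml_pd_comm n m e1) (pd_ml_comm n m e4) (pd_pd_comm n m _ _)).eq
      · rcases lt_or_ge j.val n₂ with hj2 | hj2
        · simp only [if_neg (not_lt.2 hj1), if_pos hj2]
          rw [negmulE, mulnegE]
          exact neginjE n m (comm_block (R := Module.End ℂ (SAlg n m))
            (ml_ml_comm n m _ _) (ml_ml_comm n m _ _) (pd_ml_comm n m e3)
            (pd_ml_comm n m e4)).eq
        · simp only [if_neg (not_lt.2 hj1), if_neg (not_lt.2 hj2)]
          rw [negmulE, mulnegE]
          exact neginjE n m (comm_block (R := Module.End ℂ (SAlg n m))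
            (ml_ml_comm n m _ _) (ml_pd_comm n m e2) (pd_ml_comm n m e3)
            (pd_pd_comm n m _ _)).eq
    · rcases lt_or_ge i.val n₂ with hi2 | hi2
      · simp only [if_neg (not_lt.2 hi1), if_pos hi2]
        rcases lt_or_ge j.val n₁ with hj1 | hj1
        · simp only [if_pos hj1]
          exact (comm_block (R := Module.End ℂ (SAlg n m))
            (pd_ml_comm n m e2) (pd_pd_comm n m _ _) (pd_ml_comm n m e4)
            (pd_pd_comm n m _ _)).eq
        · rcases lt_or_ge j.val n₂ with hj2 | hj2
          · simp only [if_neg (not_lt.2 hj1), if_pos hj2]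
            exact (comm_block (R := Module.End ℂ (SAlg n m))
              (pd_ml_comm n m e1) (pd_ml_comm n m e2) (pd_ml_comm n m e3)
              (pd_ml_comm n m e4)).eq
          · simp only [if_neg (not_lt.2 hj1), if_neg (not_lt.2 hj2)]
            exact (comm_block (R := Module.End ℂ (SAlg n m))
              (pd_ml_comm n m e1) (pd_pd_comm n m _ _) (pd_ml_comm n m e3)
              (pd_pd_comm n m _ _)).eq
      · simp only [if_neg (not_lt.2 hi1), if_neg (not_lt.2 hi2)]
        rcases lt_or_ge j.val n₁ with hj1 | hj1
        · simp only [if_pos hj1]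
          rw [negmulE, mulnegE]
          exact neginjE n m (comm_block (R := Module.End ℂ (SAlg n m))
            (ml_ml_comm n m _ _) (ml_pd_comm n m e3) (pd_ml_comm n m e2)
            (pd_pd_comm n m _ _)).eq
        · rcases lt_or_ge j.val n₂ with hj2 | hj2
          · simp only [if_neg (not_lt.2 hj1), if_pos hj2]
            rw [negmulE, mulnegE]
            exact neginjE n m (comm_block (R := Module.End ℂ (SAlg n m))
              (ml_ml_comm n m _ _) (ml_ml_comm n m _ _) (pd_ml_comm n m e1)
              (pd_ml_comm n m e2)).eq
          · simp only [if_neg (not_lt.2 hj1), if_neg (not_lt.2 hj2)]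
            rw [negmulE, mulnegE]
            exact neginjE n m (comm_block (R := Module.End ℂ (SAlg n m))
              (ml_ml_comm n m _ _) (ml_pd_comm n m e4) (pd_ml_comm n m e1)
              (pd_pd_comm n m _ _)).eq

lemma Fop_mul_Gop (r s : Fin m) :
    Fop n m r * Gop n m s = Gop n m s * Fop n m r +
      if r = s then (KXop n m r + KYop n m r + (-1 : ℂ) • 1) else 0 := by
  have smulm1 : ((-1:ℂ) • (1 : Module.End ℂ (SAlg n m))) = -1 := by ext z; simp
  by_cases hrs : r = s
  · subst hrs
    rw [if_pos rfl, smulm1]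
    simp only [Fop, Gop, KXop, KYop, ← Module.End.mul_eq_comp, pdθ_eq, pdϑ_eq, mθ_eq, mϑ_eq]
    rw [fdiag1 (R := Module.End ℂ (SAlg n m)) (htc' n m r) (hsd' n m r)
      (hc_mf_ne n m (by simp) : cS n m (Sum.inl r) * mfS n m (Sum.inr r) = _)
      (hc_mf_ne n m (by simp) : cS n m (Sum.inr r) * mfS n m (Sum.inl r) = _)]
    abel
  · rw [if_neg hrs, add_zero]
    simp only [Fop, Gop, ← Module.End.mul_eq_comp, pdθ_eq, pdϑ_eq, mθ_eq, mϑ_eq]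
    have h1 : (Sum.inl r : Fin m ⊕ Fin m) ≠ Sum.inl s := fun h => hrs (Sum.inl_injective h)
    have h4 : (Sum.inr r : Fin m ⊕ Fin m) ≠ Sum.inr s := fun h => hrs (Sum.inr_injective h)
    exact anti4 (R := Module.End ℂ (SAlg n m)) (hc_mf_ne n m h1) (hc_mf_ne n m (Sum.inl_ne_inr))
      (hc_mf_ne n m (Sum.inr_ne_inl)) (hc_mf_ne n m h4)

lemma Dop_mul_Gop (i : Fin n) (r : Fin m) :
    Dop n m n₁ n₂ i * Gop n m r = Gop n m r * Dop n m n₁ n₂ i := by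
  simp only [Dop, Gop, ← Module.End.mul_eq_comp, pdx_eq, pdy_eq, mx_eq, my_eq, mθ_eq, mϑ_eq]
  split_ifs
  · rw [negmulE, mulnegE]
    exact neginjE n m (comm_block (R := Module.End ℂ (SAlg n m))
      (rel_ml_mf n m _ _) (rel_ml_mf n m _ _) (rel_pd_mf n m _ _) (rel_pd_mf n m _ _)).eq
  · exact (comm_block (R := Module.End ℂ (SAlg n m))
      (rel_pd_mf n m _ _) (rel_pd_mf n m _ _) (rel_pd_mf n m _ _) (rel_pd_mf n m _ _)).eq
  · rw [negmulE, mulnegE]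
    exact neginjE n m (comm_block (R := Module.End ℂ (SAlg n m))
      (rel_ml_mf n m _ _) (rel_ml_mf n m _ _) (rel_pd_mf n m _ _) (rel_pd_mf n m _ _)).eq

lemma Fop_mul_Eop (r : Fin m) (i : Fin n) :
    Fop n m r * Eop n m n₁ n₂ i = Eop n m n₁ n₂ i * Fop n m r := by
  simp only [Fop, Eop, ← Module.End.mul_eq_comp, pdx_eq, pdy_eq, mx_eq, my_eq, pdθ_eq, pdϑ_eq]
  split_ifs
  · exact (comm_block (R := Module.End ℂ (SAlg n m)) (rel_ml_c n m _ _).symm (rel_pd_c n m _ _).symm (rel_ml_c n m _ _).symm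
      (rel_pd_c n m _ _).symm).eq
  · exact (comm_block (R := Module.End ℂ (SAlg n m)) (rel_ml_c n m _ _).symm (rel_ml_c n m _ _).symm (rel_ml_c n m _ _).symm
      (rel_ml_c n m _ _).symm).eq
  · exact (comm_block (R := Module.End ℂ (SAlg n m)) (rel_ml_c n m _ _).symm (rel_pd_c n m _ _).symm (rel_ml_c n m _ _).symm
      (rel_pd_c n m _ _).symm).eq


lemma HXop_mul_Eop (h12 : n₁ < n₂) (i j : Fin n) :
    HXop n m n₁ i * Eop n m n₁ n₂ j = Eop n m n₁ n₂ j * HXop n m n₁ i +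
      if i = j then Eop n m n₁ n₂ i else 0 := by
  by_cases hij : i = j
  · subst hij
    rw [if_pos rfl]
    simp only [HXop, Eop, ← Module.End.mul_eq_comp, pdx_eq, pdy_eq, mx_eq, my_eq]
    rcases lt_or_ge i.val n₁ with h1 | h1
    · have h2 : i.val < n₂ := h1.trans h12
      simp only [if_pos h1, if_pos h2]
      exact xdiag1 (R := Module.End ℂ (SAlg n m)) (hpa' n m i) (hpb' n m i) (rel_ml_ml n m _ _)
    · rcases lt_or_ge i.val n₂ with h2 | h2
      · simp only [if_neg (not_lt.2 h1), if_pos h2]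
        exact xdiag2 (R := Module.End ℂ (SAlg n m)) (hpa' n m i) (hpb' n m i) (rel_ml_ml n m _ _)
      · simp only [if_neg (not_lt.2 h1), if_neg (not_lt.2 h2)]
        exact xdiag3 (R := Module.End ℂ (SAlg n m)) (hpa' n m i) (hqa' n m i) (rel_pd_pd n m _ _)
  · rw [if_neg hij, add_zero]
    simp only [HXop, Eop, ← Module.End.mul_eq_comp, pdx_eq, pdy_eq, mx_eq, my_eq]
    have e1 : (Sum.inl i : Fin n ⊕ Fin n) ≠ Sum.inl j := fun h => hij (Sum.inl_injective h)
    have e2 : (Sum.inl i : Fin n ⊕ Fin n) ≠ Sum.inr j := Sum.inl_ne_inr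
    have e4 : (Sum.inr i : Fin n ⊕ Fin n) ≠ Sum.inr j := fun h => hij (Sum.inr_injective h)
    have hb1 : Commute (mlS n m (Sum.inl i) * pdS n m (Sum.inl i))
        (mlS n m (Sum.inr j) * pdS n m (Sum.inl j)) :=
      comm_block (R := Module.End ℂ (SAlg n m)) (ml_ml_comm n m _ _) (ml_pd_comm n m e1)
        (pd_ml_comm n m e2) (pd_pd_comm n m _ _)
    have hb2 : Commute (mlS n m (Sum.inl i) * pdS n m (Sum.inl i))
        (mlS n m (Sum.inl j) * mlS n m (Sum.inr j)) :=
      comm_block (R := Module.End ℂ (SAlg n m)) (ml_ml_comm n m _ _) (ml_ml_comm n m _ _)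
        (pd_ml_comm n m e1) (pd_ml_comm n m e2)
    have hb3 : Commute (mlS n m (Sum.inl i) * pdS n m (Sum.inl i))
        (mlS n m (Sum.inl j) * pdS n m (Sum.inr j)) :=
      comm_block (R := Module.End ℂ (SAlg n m)) (ml_ml_comm n m _ _) (ml_pd_comm n m e2)
        (pd_ml_comm n m e1) (pd_pd_comm n m _ _)
    split_ifs <;>
      first
        | exact hb1.eq
        | exact hb2.eq
        | exact hb3.eq
        | (rw [negmulE, mulnegE]; exact neginjE n m hb1.eq)
        | (rw [negmulE, mulnegE]; exact neginjE n m hb2.eq)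
        | (rw [negmulE, mulnegE]; exact neginjE n m hb3.eq)

lemma HYop_mul_Eop (h12 : n₁ < n₂) (i j : Fin n) :
    HYop n m n₂ i * Eop n m n₁ n₂ j = Eop n m n₁ n₂ j * HYop n m n₂ i +
      if i = j then Eop n m n₁ n₂ i else 0 := by
  by_cases hij : i = j
  · subst hij
    rw [if_pos rfl]
    simp only [HYop, Eop, ← Module.End.mul_eq_comp, pdx_eq, pdy_eq, mx_eq, my_eq]
    rcases lt_or_ge i.val n₁ with h1 | h1
    · have h2 : i.val < n₂ := h1.trans h12
      simp only [if_pos h1, if_pos h2]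
      exact ydiag1 (R := Module.End ℂ (SAlg n m)) (hqb' n m i) (hpb' n m i) (rel_pd_pd n m _ _)
    · rcases lt_or_ge i.val n₂ with h2 | h2
      · simp only [if_neg (not_lt.2 h1), if_pos h2]
        exact ydiag2 (R := Module.End ℂ (SAlg n m)) (hqb' n m i) (hqa' n m i) (rel_ml_ml n m _ _)
      · simp only [if_neg (not_lt.2 h1), if_neg (not_lt.2 h2)]
        exact ydiag3 (R := Module.End ℂ (SAlg n m)) (hqb' n m i) (hqa' n m i) (rel_ml_ml n m _ _)
  · rw [if_neg hij, add_zero]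
    simp only [HYop, Eop, ← Module.End.mul_eq_comp, pdx_eq, pdy_eq, mx_eq, my_eq]
    have e3 : (Sum.inr i : Fin n ⊕ Fin n) ≠ Sum.inl j := Sum.inr_ne_inl
    have e4 : (Sum.inr i : Fin n ⊕ Fin n) ≠ Sum.inr j := fun h => hij (Sum.inr_injective h)
    have hb1 : Commute (mlS n m (Sum.inr i) * pdS n m (Sum.inr i))
        (mlS n m (Sum.inr j) * pdS n m (Sum.inl j)) :=
      comm_block (R := Module.End ℂ (SAlg n m)) (ml_ml_comm n m _ _) (ml_pd_comm n m e3)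
        (pd_ml_comm n m e4) (pd_pd_comm n m _ _)
    have hb2 : Commute (mlS n m (Sum.inr i) * pdS n m (Sum.inr i))
        (mlS n m (Sum.inl j) * mlS n m (Sum.inr j)) :=
      comm_block (R := Module.End ℂ (SAlg n m)) (ml_ml_comm n m _ _) (ml_ml_comm n m _ _)
        (pd_ml_comm n m e3) (pd_ml_comm n m e4)
    have hb3 : Commute (mlS n m (Sum.inr i) * pdS n m (Sum.inr i))
        (mlS n m (Sum.inl j) * pdS n m (Sum.inr j)) :=
      comm_block (R := Module.End ℂ (SAlg n m)) (ml_ml_comm n m _ _) (ml_pd_comm n m e4)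
        (pd_ml_comm n m e3) (pd_pd_comm n m _ _)
    split_ifs <;>
      first
        | exact hb1.eq
        | exact hb2.eq
        | exact hb3.eq
        | (rw [negmulE, mulnegE]; exact neginjE n m hb1.eq)
        | (rw [negmulE, mulnegE]; exact neginjE n m hb2.eq)
        | (rw [negmulE, mulnegE]; exact neginjE n m hb3.eq)

lemma KXop_mul_Gop (r s : Fin m) :
    KXop n m r * Gop n m s = Gop n m s * KXop n m r + if r = s then Gop n m r else 0 := by
  by_cases hrs : r = s
  · subst hrs
    rw [if_pos rfl]
    simp only [KXop, Gop, ← Module.End.mul_eq_comp, pdθ_eq, mθ_eq, mϑ_eq]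
    exact xfdiag (R := Module.End ℂ (SAlg n m)) (htc' n m r)
      (hc_mf_ne n m (Sum.inl_ne_inr)) (rel_mf_mf n m _ _) (rel_mf_sq n m _)
  · rw [if_neg hrs, add_zero]
    simp only [KXop, Gop, ← Module.End.mul_eq_comp, pdθ_eq, mθ_eq, mϑ_eq]
    have h1 : (Sum.inl r : Fin m ⊕ Fin m) ≠ Sum.inl s := fun h => hrs (Sum.inl_injective h)
    exact anti4 (R := Module.End ℂ (SAlg n m)) (rel_mf_mf n m _ _) (rel_mf_mf n m _ _)
      (hc_mf_ne n m h1) (hc_mf_ne n m (Sum.inl_ne_inr))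

lemma KYop_mul_Gop (r s : Fin m) :
    KYop n m r * Gop n m s = Gop n m s * KYop n m r + if r = s then Gop n m r else 0 := by
  by_cases hrs : r = s
  · subst hrs
    rw [if_pos rfl]
    simp only [KYop, Gop, ← Module.End.mul_eq_comp, pdϑ_eq, mθ_eq, mϑ_eq]
    exact yfdiag (R := Module.End ℂ (SAlg n m)) (hsd' n m r)
      (hc_mf_ne n m (Sum.inr_ne_inl)) (rel_mf_mf n m _ _) (rel_mf_sq n m _)
  · rw [if_neg hrs, add_zero]
    simp only [KYop, Gop, ← Module.End.mul_eq_comp, pdϑ_eq, mθ_eq, mϑ_eq]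
    have h4 : (Sum.inr r : Fin m ⊕ Fin m) ≠ Sum.inr s := fun h => hrs (Sum.inr_injective h)
    exact anti4 (R := Module.End ℂ (SAlg n m)) (rel_mf_mf n m _ _) (rel_mf_mf n m _ _)
      (hc_mf_ne n m (Sum.inr_ne_inl)) (hc_mf_ne n m h4)

lemma HXop_mul_Gop (i : Fin n) (r : Fin m) :
    HXop n m n₁ i * Gop n m r = Gop n m r * HXop n m n₁ i := by
  simp only [HXop, Gop, ← Module.End.mul_eq_comp, pdx_eq, mx_eq, mθ_eq, mϑ_eq]
  have hb : Commute (mlS n m (Sum.inl i) * pdS n m (Sum.inl i))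
      (mfS n m (Sum.inl r) * mfS n m (Sum.inr r)) :=
    comm_block (R := Module.End ℂ (SAlg n m)) (rel_ml_mf n m _ _) (rel_ml_mf n m _ _)
      (rel_pd_mf n m _ _) (rel_pd_mf n m _ _)
  split_ifs
  · rw [negmulE, mulnegE]; exact neginjE n m hb.eq
  · exact hb.eq

lemma HYop_mul_Gop (i : Fin n) (r : Fin m) :
    HYop n m n₂ i * Gop n m r = Gop n m r * HYop n m n₂ i := by
  simp only [HYop, Gop, ← Module.End.mul_eq_comp, pdy_eq, my_eq, mθ_eq, mϑ_eq]
  have hb : Commute (mlS n m (Sum.inr i) * pdS n m (Sum.inr i))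
      (mfS n m (Sum.inl r) * mfS n m (Sum.inr r)) :=
    comm_block (R := Module.End ℂ (SAlg n m)) (rel_ml_mf n m _ _) (rel_ml_mf n m _ _)
      (rel_pd_mf n m _ _) (rel_pd_mf n m _ _)
  split_ifs
  · exact hb.eq
  · rw [negmulE, mulnegE]; exact neginjE n m hb.eq

lemma KXop_mul_Eop (r : Fin m) (i : Fin n) :
    KXop n m r * Eop n m n₁ n₂ i = Eop n m n₁ n₂ i * KXop n m r := by
  simp only [KXop, Eop, ← Module.End.mul_eq_comp, pdx_eq, pdy_eq, mx_eq, my_eq, pdθ_eq, mθ_eq]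
  split_ifs
  · exact (comm_block (R := Module.End ℂ (SAlg n m)) (rel_ml_mf n m _ _).symm
      (rel_pd_mf n m _ _).symm (rel_ml_c n m _ _).symm (rel_pd_c n m _ _).symm).eq
  · exact (comm_block (R := Module.End ℂ (SAlg n m)) (rel_ml_mf n m _ _).symm
      (rel_ml_mf n m _ _).symm (rel_ml_c n m _ _).symm (rel_ml_c n m _ _).symm).eq
  · exact (comm_block (R := Module.End ℂ (SAlg n m)) (rel_ml_mf n m _ _).symm
      (rel_pd_mf n m _ _).symm (rel_ml_c n m _ _).symm (rel_pd_c n m _ _).symm).eq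

lemma KYop_mul_Eop (r : Fin m) (i : Fin n) :
    KYop n m r * Eop n m n₁ n₂ i = Eop n m n₁ n₂ i * KYop n m r := by
  simp only [KYop, Eop, ← Module.End.mul_eq_comp, pdx_eq, pdy_eq, mx_eq, my_eq, pdϑ_eq, mϑ_eq]
  split_ifs
  · exact (comm_block (R := Module.End ℂ (SAlg n m)) (rel_ml_mf n m _ _).symm
      (rel_pd_mf n m _ _).symm (rel_ml_c n m _ _).symm (rel_pd_c n m _ _).symm).eq
  · exact (comm_block (R := Module.End ℂ (SAlg n m)) (rel_ml_mf n m _ _).symm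
      (rel_ml_mf n m _ _).symm (rel_ml_c n m _ _).symm (rel_ml_c n m _ _).symm).eq
  · exact (comm_block (R := Module.End ℂ (SAlg n m)) (rel_ml_mf n m _ _).symm
      (rel_pd_mf n m _ _).symm (rel_ml_c n m _ _).symm (rel_pd_c n m _ _).symm).eq


lemma sum_mul_sum_swap {R : Type*} [Ring R] {ι κ : Type*} [Fintype ι] [Fintype κ]
    (A : ι → R) (B : κ → R) (h : ∀ i j, A i * B j = B j * A i) :
    (∑ i, A i) * (∑ j, B j) = (∑ j, B j) * (∑ i, A i) := by
  rw [Finset.sum_mul_sum, Finset.sum_mul_sum]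
  simp_rw [h]
  rw [Finset.sum_comm]

lemma countC (h12 : n₁ ≤ n₂) (h2n : n₂ ≤ n) :
    (∑ i : Fin n, if n₁ ≤ i.val ∧ i.val < n₂ then (1:ℂ) else 0) = ((n₂ - n₁ : ℕ) : ℂ) := by
  rw [Fin.sum_univ_eq_sum_range (fun k => if n₁ ≤ k ∧ k < n₂ then (1:ℂ) else 0)]
  rw [Finset.sum_boole]
  norm_cast
  have : Finset.filter (fun k => n₁ ≤ k ∧ k < n₂) (Finset.range n) = Finset.Ico n₁ n₂ := by
    ext k
    simp only [Finset.mem_filter, Finset.mem_range, Finset.mem_Ico]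
    omega
  rw [this, Nat.card_Ico]

lemma msumC : (∑ _r : Fin m, (-1:ℂ)) = -(m:ℂ) := by
  simp [Finset.sum_const]

lemma key1 (h12 : n₁ < n₂) (h2n : n₂ ≤ n) :
    Δtw n m n₁ n₂ * ηtw n m n₁ n₂ = ηtw n m n₁ n₂ * Δtw n m n₁ n₂
      + degtwX n m n₁ + degtwY n m n₂
      + ((n₂ - n₁ : ℕ) : ℂ) • 1 + (-(m:ℂ)) • 1 := by
  rw [Δtw_eq, ηtw_eq, degtwX_eq, degtwY_eq]
  have hAC := sum_mul_sum_comm (R := Module.End ℂ (SAlg n m)) (Dop n m n₁ n₂) (Eop n m n₁ n₂)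
    (fun i => HXop n m n₁ i + HYop n m n₂ i +
      (if n₁ ≤ i.val ∧ i.val < n₂ then (1:ℂ) else 0) • 1)
    (Dop_mul_Eop n m n₁ n₂ h12)
  have hBG := sum_mul_sum_comm (R := Module.End ℂ (SAlg n m)) (Fop n m) (Gop n m)
    (fun r => KXop n m r + KYop n m r + (-1:ℂ) • 1) (Fop_mul_Gop n m)
  have hAG := sum_mul_sum_swap (Dop n m n₁ n₂) (Gop n m) (Dop_mul_Gop n m n₁ n₂)
  have hBC := sum_mul_sum_swap (Fop n m) (Eop n m n₁ n₂) (Fop_mul_Eop n m n₁ n₂)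
  have hsplit1 : (∑ i, (HXop n m n₁ i + HYop n m n₂ i +
      (if n₁ ≤ i.val ∧ i.val < n₂ then (1:ℂ) else 0) • (1 : Module.End ℂ (SAlg n m))))
      = (∑ i, HXop n m n₁ i) + (∑ i, HYop n m n₂ i) + ((n₂ - n₁ : ℕ) : ℂ) • 1 := by
    rw [Finset.sum_add_distrib, Finset.sum_add_distrib, ← Finset.sum_smul,
      countC n n₁ n₂ h12.le h2n]
  have hsplit2 : (∑ r, (KXop n m r + KYop n m r +
      (-1:ℂ) • (1 : Module.End ℂ (SAlg n m))))
      = (∑ r, KXop n m r) + (∑ r, KYop n m r) + (-(m:ℂ)) • 1 := by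
    rw [Finset.sum_add_distrib, Finset.sum_add_distrib, ← Finset.sum_smul, msumC]
  rw [add_mul, mul_add, mul_add, hAC, hBG, hAG, hBC, hsplit1, hsplit2,
    add_mul, mul_add, mul_add]
  abel

lemma key2 (h12 : n₁ < n₂) :
    degtwX n m n₁ * ηtw n m n₁ n₂ = ηtw n m n₁ n₂ * degtwX n m n₁ + ηtw n m n₁ n₂ := by
  rw [degtwX_eq, ηtw_eq]
  have hXC := sum_mul_sum_comm (R := Module.End ℂ (SAlg n m)) (HXop n m n₁) (Eop n m n₁ n₂)
    (Eop n m n₁ n₂) (HXop_mul_Eop n m n₁ n₂ h12)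
  have hKG := sum_mul_sum_comm (R := Module.End ℂ (SAlg n m)) (KXop n m) (Gop n m)
    (Gop n m) (KXop_mul_Gop n m)
  have hXG := sum_mul_sum_swap (HXop n m n₁) (Gop n m) (HXop_mul_Gop n m n₁)
  have hKC := sum_mul_sum_swap (KXop n m) (Eop n m n₁ n₂) (KXop_mul_Eop n m n₁ n₂)
  rw [add_mul, mul_add, mul_add, hXC, hKG, hXG, hKC, add_mul, mul_add, mul_add]
  abel

lemma key3 (h12 : n₁ < n₂) :
    degtwY n m n₂ * ηtw n m n₁ n₂ = ηtw n m n₁ n₂ * degtwY n m n₂ + ηtw n m n₁ n₂ := by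
  rw [degtwY_eq, ηtw_eq]
  have hYC := sum_mul_sum_comm (R := Module.End ℂ (SAlg n m)) (HYop n m n₂) (Eop n m n₁ n₂)
    (Eop n m n₁ n₂) (HYop_mul_Eop n m n₁ n₂ h12)
  have hKG := sum_mul_sum_comm (R := Module.End ℂ (SAlg n m)) (KYop n m) (Gop n m)
    (Gop n m) (KYop_mul_Gop n m)
  have hYG := sum_mul_sum_swap (HYop n m n₂) (Gop n m) (HYop_mul_Gop n m n₂)
  have hKC := sum_mul_sum_swap (KYop n m) (Eop n m n₁ n₂) (KYop_mul_Eop n m n₁ n₂)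
  rw [add_mul, mul_add, mul_add, hYC, hKG, hYG, hKC, add_mul, mul_add, mul_add]
  abel

end SAux

theorem twisted_delta_eta_pow (h₁ : 1 ≤ n₁) (h₂ : n₁ + 1 < n₂) (h₃ : n₂ ≤ n)
    (f : SAlg n m) (ℓ ℓ' : ℤ)
    (hf : Δtw n m n₁ n₂ f = 0)
    (hX : degtwX n m n₁ f = (ℓ : ℂ) • f)
    (hY : degtwY n m n₂ f = (ℓ' : ℂ) • f) :
    ∀ ℓ₁ : ℕ, 1 ≤ ℓ₁ →
      Δtw n m n₁ n₂ ((ηtw n m n₁ n₂ ^ ℓ₁) f)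
        = ((ℓ₁ : ℂ) * ((n₂ : ℂ) - n₁ - m + ℓ + ℓ' + ℓ₁ - 1))
            • (ηtw n m n₁ n₂ ^ (ℓ₁ - 1)) f := by
  have h12 : n₁ < n₂ := by omega
  have k1 := SAux.key1 n m n₁ n₂ h12 h₃
  have k2 := SAux.key2 n m n₁ n₂ h12
  have k3 := SAux.key3 n m n₁ n₂ h12
  set η := ηtw n m n₁ n₂ with hηdef
  have hXk : ∀ t : ℕ, degtwX n m n₁ ((η ^ t) f) = ((ℓ:ℂ) + t) • ((η ^ t) f) := by
    intro t
    induction t with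
    | zero => simpa using hX
    | succ t ih =>
      have hp : (η ^ (t+1)) f = η ((η ^ t) f) := by
        rw [pow_succ', Module.End.mul_apply]
      rw [hp]
      have e1 : degtwX n m n₁ (η ((η ^ t) f))
          = (η * degtwX n m n₁ + η) ((η ^ t) f) := by rw [← k2]; rfl
      rw [e1, LinearMap.add_apply, Module.End.mul_apply, ih, map_smul, ← hp]
      rw [show ((ℓ:ℂ) + ((t+1 : ℕ) : ℂ)) = ((ℓ:ℂ) + t) + 1 by push_cast; ring]
      conv_rhs => rw [add_smul, one_smul]
  have hYk : ∀ t : ℕ, degtwY n m n₂ ((η ^ t) f) = ((ℓ':ℂ) + t) • ((η ^ t) f) := by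
    intro t
    induction t with
    | zero => simpa using hY
    | succ t ih =>
      have hp : (η ^ (t+1)) f = η ((η ^ t) f) := by
        rw [pow_succ', Module.End.mul_apply]
      rw [hp]
      have e1 : degtwY n m n₂ (η ((η ^ t) f))
          = (η * degtwY n m n₂ + η) ((η ^ t) f) := by rw [← k3]; rfl
      rw [e1, LinearMap.add_apply, Module.End.mul_apply, ih, map_smul, ← hp]
      rw [show ((ℓ':ℂ) + ((t+1 : ℕ) : ℂ)) = ((ℓ':ℂ) + t) + 1 by push_cast; ring]
      conv_rhs => rw [add_smul, one_smul]
  have hDk : ∀ t : ℕ, Δtw n m n₁ n₂ ((η ^ (t+1)) f)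
      = (((t:ℂ) + 1) * (((n₂:ℂ) - n₁ - m + ℓ + ℓ') + t)) • ((η ^ t) f) := by
    intro t
    induction t with
    | zero =>
      rw [pow_one]
      have e1 : Δtw n m n₁ n₂ (η f)
          = (η * Δtw n m n₁ n₂ + degtwX n m n₁ + degtwY n m n₂
            + ((n₂ - n₁ : ℕ) : ℂ) • 1 + (-(m:ℂ)) • 1) f := by rw [← k1]; rfl
      rw [e1]
      simp only [LinearMap.add_apply, Module.End.mul_apply, LinearMap.smul_apply,
        Module.End.one_apply]
      rw [hf, map_zero, hX, hY, zero_add, ← add_smul, ← add_smul, ← add_smul]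
      rw [pow_zero, Module.End.one_apply]
      congr 1
      rw [Nat.cast_sub h12.le]
      push_cast
      ring
    | succ t ih =>
      have hp : (η ^ (t+2)) f = η ((η ^ (t+1)) f) := by
        rw [pow_succ', Module.End.mul_apply]
      rw [hp]
      have e1 : Δtw n m n₁ n₂ (η ((η ^ (t+1)) f))
          = (η * Δtw n m n₁ n₂ + degtwX n m n₁ + degtwY n m n₂
            + ((n₂ - n₁ : ℕ) : ℂ) • 1 + (-(m:ℂ)) • 1) ((η ^ (t+1)) f) := by rw [← k1]; rfl
      rw [e1]
      simp only [LinearMap.add_apply, Module.End.mul_apply, LinearMap.smul_apply,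
        Module.End.one_apply]
      have hp'' : (η ^ (t+1)) f = η ((η ^ t) f) := by
        rw [pow_succ', Module.End.mul_apply]
      rw [ih, map_smul, ← hp'', hXk (t+1), hYk (t+1), ← add_smul, ← add_smul, ← add_smul,
        ← add_smul]
      congr 1
      rw [Nat.cast_sub h12.le]
      push_cast
      ring
  intro ℓ₁ hℓ₁
  obtain ⟨k, rfl⟩ : ∃ k, ℓ₁ = k + 1 := ⟨ℓ₁ - 1, (Nat.succ_pred_eq_of_pos hℓ₁).symm⟩
  rw [Nat.add_sub_cancel, hDk k]
  congr 1
  push_cast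
  ring
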